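/- Scalar fixed-point iteration converges from above to the largest solution (Case 1 instance of Lemma 1(ii)): for real numbers y, F and α ≥ 0, define q^0 = 1 and q^{t+1} = σ(y − F + α·q^t). Then (q^t) is monotone nonincreasing, bounded below by 0, its limit L exists and satisfies L = σ(y − F + α·L), L ≤ q^1, and p ≤ L for every p ∈ [0,1] with p = σ(y − F + α·p); i.e., L is the largest solution of the self-consistency equation in [0,1]. -/

import Mathlib

open Filter Topology

/-- The logistic function σ(x) = exp(x)/(1+exp(x)). -/
noncomputable def logistic (x : ℝ) : ℝ := Real.exp x / (1 + Real.exp x)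

lemma logistic_pos_denom (x : ℝ) : 0 < 1 + Real.exp x := by positivity

lemma logistic_eq (x : ℝ) : logistic x = 1 - 1 / (1 + Real.exp x) := by
  rw [logistic, eq_sub_iff_add_eq, ← add_div, div_eq_one_iff_eq (ne_of_gt (logistic_pos_denom x))]
  ring

lemma logistic_nonneg (x : ℝ) : 0 ≤ logistic x := by
  unfold logistic; positivity

lemma logistic_le_one (x : ℝ) : logistic x ≤ 1 := by
  rw [logistic_eq]
  have := logistic_pos_denom x
  have : 0 ≤ 1 / (1 + Real.exp x) := by positivity
  linarith

lemma logistic_mono : Monotone logistic := by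
  intro a b hab
  rw [logistic_eq, logistic_eq]
  have ha := logistic_pos_denom a
  have hb := logistic_pos_denom b
  have : 1 / (1 + Real.exp b) ≤ 1 / (1 + Real.exp a) := by
    apply one_div_le_one_div_of_le ha
    have := Real.exp_le_exp.2 hab
    linarith
  linarith

lemma logistic_continuous : Continuous logistic := by
  apply Continuous.div Real.continuous_exp (by continuity)
  intro x; exact ne_of_gt (logistic_pos_denom x)

theorem stmt_13 (y F α : ℝ) (hα : 0 ≤ α)
    (Q : ℕ → ℝ) (hQ0 : Q 0 = 1)
    (hQ : ∀ t, Q (t + 1) = logistic (y - F + α * Q t)) :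
    Antitone Q ∧ (∀ t, 0 ≤ Q t) ∧
      ∃ L : ℝ, Tendsto Q atTop (𝓝 L) ∧ L = logistic (y - F + α * L) ∧
        L ≤ Q 1 ∧ ∀ p : ℝ, 0 ≤ p → p ≤ 1 → p = logistic (y - F + α * p) → p ≤ L := by
  have hstep : ∀ t, Q (t + 1) ≤ Q t → Q (t + 2) ≤ Q (t + 1) := by
    intro t h
    rw [hQ (t + 1)]
    conv_rhs => rw [hQ t]
    exact logistic_mono (by nlinarith)
  have hsucc : ∀ t, Q (t + 1) ≤ Q t := by
    intro t
    induction t with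
    | zero => rw [hQ0, hQ 0]; exact logistic_le_one _
    | succ n ih => exact hstep n ih
  have hanti : Antitone Q := antitone_nat_of_succ_le hsucc
  have hnn : ∀ t, 0 ≤ Q t := by
    intro t
    cases t with
    | zero => rw [hQ0]; norm_num
    | succ n => rw [hQ n]; exact logistic_nonneg _
  refine ⟨hanti, hnn, ?_⟩
  have hbdd : BddBelow (Set.range Q) := ⟨0, by rintro _ ⟨t, rfl⟩; exact hnn t⟩
  obtain ⟨L, hL⟩ : ∃ L, Tendsto Q atTop (𝓝 L) :=
    ⟨_, tendsto_atTop_ciInf hanti hbdd⟩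
  refine ⟨L, hL, ?_, ?_, ?_⟩
  · -- fixed point
    have h1 : Tendsto (fun t => Q (t + 1)) atTop (𝓝 L) := hL.comp (tendsto_add_atTop_nat 1)
    have h2 : Tendsto (fun t => logistic (y - F + α * Q t)) atTop
        (𝓝 (logistic (y - F + α * L))) := by
      exact (logistic_continuous.tendsto _).comp (by
        exact (tendsto_const_nhds.add (tendsto_const_nhds.mul hL)))
    have : Tendsto (fun t => Q (t + 1)) atTop (𝓝 (logistic (y - F + α * L))) := by
      simpa [hQ] using h2
    exact tendsto_nhds_unique h1 this
  · exact le_of_tendsto hL (Filter.eventually_atTop.2 ⟨1, fun t ht => hanti ht⟩)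
  · intro p hp0 hp1 hpfix
    have hple : ∀ t, p ≤ Q t := by
      intro t
      induction t with
      | zero => rw [hQ0]; exact hp1
      | succ n ih =>
        rw [hQ n, hpfix]
        exact logistic_mono (by nlinarith)
    exact ge_of_tendsto hL (Filter.Eventually.of_forall hple)
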